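/- The sequence a_n/b_n, where a_n = [16 + 13n + (2n-1)·2^(2n+2)]·2^(2n+7)/(2n+5)! and b_n = 5·(2^(2n+2)-1)·2^(2n+6)/(2n+4)!, is strictly decreasing for 0 ≤ n ≤ 2 and strictly increasing for n ≥ 3. -/

import Mathlib

noncomputable def aseq (n : ℕ) : ℚ :=
  (16 + 13 * (n : ℚ) + (2 * (n : ℚ) - 1) * 2 ^ (2 * n + 2)) * 2 ^ (2 * n + 7) /
    (Nat.factorial (2 * n + 5))
noncomputable def bseq (n : ℕ) : ℚ :=
  5 * ((2 : ℚ) ^ (2 * n + 2) - 1) * 2 ^ (2 * n + 6) / (Nat.factorial (2 * n + 4))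

lemma my_one_lt_pow (n : ℕ) : (1 : ℚ) < 2 ^ (2 * n + 2) := by
  have : (1:ℚ) < 2 := by norm_num
  calc (1:ℚ) < 2 ^ 2 := by norm_num
    _ ≤ 2 ^ (2 * n + 2) := by
        apply pow_le_pow_right₀ (by norm_num)
        omega

lemma ratio_eq (n : ℕ) : aseq n / bseq n =
    (16 + 13 * (n : ℚ) + (2 * (n : ℚ) - 1) * 2 ^ (2 * n + 2)) * 2 /
      (5 * ((2 : ℚ) ^ (2 * n + 2) - 1) * (2 * (n : ℚ) + 5)) := by
  have hfact : (Nat.factorial (2 * n + 5) : ℚ)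
      = ((2 * n + 5 : ℕ) : ℚ) * (Nat.factorial (2 * n + 4) : ℚ) := by
    rw [show 2 * n + 5 = (2 * n + 4) + 1 from rfl, Nat.factorial_succ]
    push_cast
    ring
  have hF : (Nat.factorial (2 * n + 4) : ℚ) ≠ 0 := by
    positivity
  have hx : ((2:ℚ) ^ (2 * n + 2) - 1) ≠ 0 := by
    have := my_one_lt_pow n; linarith
  have h5 : ((2 * n + 5 : ℕ) : ℚ) ≠ 0 := by
    push_cast
    positivity
  have hp1 : ((2:ℚ) ^ (2 * n + 7)) ≠ 0 := by positivity
  have hp2 : ((2:ℚ) ^ (2 * n + 6)) ≠ 0 := by positivity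
  rw [aseq, bseq, hfact]
  have h27 : (2:ℚ) ^ (2 * n + 7) = 2 ^ (2 * n + 6) * 2 := by ring
  rw [h27]
  field_simp
  push_cast
  ring

lemma key (n : ℕ) (hn : 3 ≤ n) :
    90 * (n : ℚ) ^ 2 + 405 * n + 363 < 48 * 2 ^ (2 * n + 2) := by
  induction n with
  | zero => omega
  | succ m ih =>
    rcases Nat.lt_or_ge m 3 with hm | hm
    · interval_cases m
      · omega
      · omega
      · norm_num
    · have h := ih hm
      have hm' : (3:ℚ) ≤ (m:ℚ) := by exact_mod_cast hm
      have hpow : (2:ℚ) ^ (2 * (m + 1) + 2) = 4 * 2 ^ (2 * m + 2) := by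
        rw [show 2 * (m + 1) + 2 = (2 * m + 2) + 2 from by ring]
        ring
      rw [hpow]
      push_cast
      nlinarith [sq_nonneg ((m:ℚ))]

theorem stmt_12 :
    (∀ n : ℕ, n < 2 → aseq (n + 1) / bseq (n + 1) < aseq n / bseq n) ∧
    (∀ n : ℕ, 3 ≤ n → aseq n / bseq n < aseq (n + 1) / bseq (n + 1)) := by
  constructor
  · intro n hn
    interval_cases n
    · rw [ratio_eq, ratio_eq]; norm_num
    · rw [ratio_eq, ratio_eq]; norm_num
  · intro n hn
    rw [ratio_eq, ratio_eq]
    set x : ℚ := 2 ^ (2 * n + 2) with hxdef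
    have hx1 : (1:ℚ) < x := my_one_lt_pow n
    have hx4 : (2:ℚ) ^ (2 * (n + 1) + 2) = 4 * x := by
      rw [hxdef, show 2 * (n + 1) + 2 = (2 * n + 2) + 2 from by ring]
      ring
    rw [hx4]
    have hkey := key n hn
    rw [← hxdef] at hkey
    have hn' : (3:ℚ) ≤ (n:ℚ) := by exact_mod_cast hn
    have hd1 : (0:ℚ) < 5 * (x - 1) * (2 * (n:ℚ) + 5) := by
      apply mul_pos (by nlinarith) (by linarith)
    have hd2 : (0:ℚ) < 5 * (4 * x - 1) * (2 * ((n:ℚ) + 1) + 5) := by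
      apply mul_pos (by nlinarith) (by linarith)
    push_cast
    rw [div_lt_div_iff₀ hd1 hd2]
    nlinarith [mul_nonneg (by linarith : (0:ℚ) ≤ x - 1)
      (by linarith : (0:ℚ) ≤ 48 * x - (90 * (n:ℚ)^2 + 405 * n + 363))]
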